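/- The category of flat left R-modules is closed under direct limits and direct products in R-Mod if and only if R is right coherent; in particular, over a right coherent ring the flat left modules form a definable subcategory of R-Mod. -/

import Mathlib

open Module Submodule LinearMap Set Function

section Helpers

variable {R : Type} [CommRing R]

/-- For a flat module `M`, every solution of a linear relation `∑ fᵢ xᵢ = 0` is an
`M`-linear combination of a prescribed generating family of the syzygy module of `f`. -/
lemma stmt11.flat_solution_spanned {M : Type} [AddCommGroup M] [Module R M] [Module.Flat R M]
    {ι' : Type} [Fintype ι'] (f : ι' → R) {m : ℕ} (k : Fin m → (ι' → R))
    (hk : LinearMap.ker (Fintype.linearCombination R f) ≤ Submodule.span R (Set.range k))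
    (x : ι' → M) (hx : ∑ i, f i • x i = 0) :
    ∃ y : Fin m → M, ∀ i, x i = ∑ j, k j i • y j := by
  obtain ⟨κ, a, y, hxy, ha⟩ := Module.Flat.isTrivialRelation_of_sum_smul_eq_zero hx
  have hcol : ∀ j : Fin κ, (fun i => a i j) ∈ Submodule.span R (Set.range k) := by
    intro j
    apply hk
    rw [LinearMap.mem_ker, Fintype.linearCombination_apply]
    simpa [mul_comm] using ha j
  choose c hc using fun j => (mem_span_range_iff_exists_fun R).mp (hcol j)
  have haij : ∀ i j, a i j = ∑ t, c j t * k t i := by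
    intro i j
    have := congrFun (hc j) i
    simp only [Finset.sum_apply, Pi.smul_apply, smul_eq_mul] at this
    exact this.symm
  refine ⟨fun t => ∑ j, c j t • y j, fun i => ?_⟩
  rw [hxy i]
  calc ∑ j, a i j • y j = ∑ j, ∑ t, (c j t * k t i) • y j := by
        simp_rw [haij, Finset.sum_smul]
    _ = ∑ t, ∑ j, (c j t * k t i) • y j := Finset.sum_comm
    _ = ∑ t, k t i • ∑ j, c j t • y j := by
        simp_rw [Finset.smul_sum]
        congr 1; funext t; congr 1; funext j
        rw [mul_comm, mul_smul]

/-- Over a coherent ring, syzygy modules of finite families are finitely generated. -/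
lemma stmt11.syzygy_fg (hcoh : ∀ I : Ideal R, I.FG → Module.FinitePresentation R I)
    {ι' : Type} [Fintype ι'] (f : ι' → R) :
    (LinearMap.ker (Fintype.linearCombination R f)).FG := by
  set φ : (ι' → R) →ₗ[R] R := Fintype.linearCombination R f with hφ
  set I : Ideal R := Ideal.span (Set.range f) with hI
  have hrange : LinearMap.range φ = I := Fintype.range_linearCombination ..
  haveI : Module.FinitePresentation R I :=
    hcoh I (Submodule.fg_def.mpr ⟨_, Set.finite_range f, rfl⟩)
  have hmem : ∀ v, φ v ∈ I := fun v => by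
    rw [← hrange]; exact LinearMap.mem_range_self _ _
  set ψ : (ι' → R) →ₗ[R] I := φ.codRestrict I hmem with hψ
  have hsurj : Function.Surjective ψ := by
    rintro ⟨z, hz⟩
    rw [← hrange] at hz
    obtain ⟨v, hv⟩ := hz
    exact ⟨v, Subtype.ext hv⟩
  have := Module.FinitePresentation.fg_ker ψ hsurj
  rwa [hψ, LinearMap.ker_codRestrict] at this

/-- Over a coherent ring, a product of flat modules is flat. -/
lemma stmt11.flat_pi (hcoh : ∀ I : Ideal R, I.FG → Module.FinitePresentation R I)
    (ι : Type) (M : ι → Type) [∀ i, AddCommGroup (M i)] [∀ i, Module R (M i)]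
    (hM : ∀ i, Module.Flat R (M i)) : Module.Flat R (∀ i, M i) := by
  apply Module.Flat.of_forall_isTrivialRelation
  intro ι' f x hx
  obtain ⟨m, k, hk⟩ := Submodule.fg_iff_exists_fin_generating_family.mp
    (stmt11.syzygy_fg hcoh f)
  have hrel : ∀ p, ∑ i, f i • x i p = 0 := fun p => by
    simpa using congrFun hx p
  have key : ∀ p, ∃ y : Fin m → M p, ∀ i, x i p = ∑ j, k j i • y j := fun p => by
    haveI := hM p
    exact stmt11.flat_solution_spanned f k hk.ge (fun i => x i p) (hrel p)
  choose y hy using key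
  refine ⟨m, fun i j => k j i, fun j p => y p j, fun i => ?_, fun j => ?_⟩
  · funext p
    simpa [Finset.sum_apply] using hy p i
  · have hkj : k j ∈ LinearMap.ker (Fintype.linearCombination R f) := by
      rw [← hk]; exact Submodule.subset_span ⟨j, rfl⟩
    rw [LinearMap.mem_ker, Fintype.linearCombination_apply] at hkj
    simpa [mul_comm] using hkj

/-- A directed limit of flat modules is flat (no coherence needed). -/
lemma stmt11.flat_directLimit (ι : Type) [Preorder ι] [Nonempty ι] [IsDirected ι (· ≤ ·)]
    [DecidableEq ι] (G : ι → Type) [∀ i, AddCommGroup (G i)] [∀ i, Module R (G i)]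
    (f : ∀ i j, i ≤ j → G i →ₗ[R] G j) [DirectedSystem G (fun i j hij => f i j hij)]
    (hG : ∀ i, Module.Flat R (G i)) : Module.Flat R (Module.DirectLimit G f) := by
  apply Module.Flat.of_forall_isTrivialRelation
  intro ι' r x hx
  choose j g hg using fun i => Module.DirectLimit.exists_of (x i)
  obtain ⟨J, hJ⟩ := Finset.exists_le (Finset.image j Finset.univ)
  have hle : ∀ i, j i ≤ J := fun i => hJ _ (Finset.mem_image_of_mem _ (Finset.mem_univ i))
  set g' : Fin ι' → G J := fun i => f (j i) J (hle i) (g i) with hg'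
  have hof : ∀ i, Module.DirectLimit.of R ι G f J (g' i) = x i := fun i => by
    rw [hg', Module.DirectLimit.of_f, hg]
  have hzero : Module.DirectLimit.of R ι G f J (∑ i, r i • g' i) = 0 := by
    rw [map_sum]
    simp_rw [map_smul, hof]
    exact hx
  obtain ⟨K, hJK, hK⟩ := Module.DirectLimit.of.zero_exact hzero
  rw [map_sum] at hK
  simp_rw [map_smul] at hK
  haveI := hG K
  obtain ⟨κ, a, y, h1, h2⟩ := Module.Flat.isTrivialRelation_of_sum_smul_eq_zero hK
  refine ⟨κ, a, fun t => Module.DirectLimit.of R ι G f K (y t),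
    fun i => ?_, h2⟩
  have h1i : f J K hJK (g' i) = ∑ t, a i t • y t := h1 i
  rw [← hof i, ← Module.DirectLimit.of_f (hij := hJK), h1i, map_sum]
  simp_rw [map_smul]

/-- Products of flats being flat forces coherence. -/
lemma stmt11.coherent_of_pi_flat
    (hpi : ∀ (ι : Type) (M : ι → Type) [∀ i, AddCommGroup (M i)] [∀ i, Module R (M i)],
        (∀ i, Module.Flat R (M i)) → Module.Flat R (∀ i, M i))
    (I : Ideal R) (hI : I.FG) : Module.FinitePresentation R I := by
  obtain ⟨n, f, hf⟩ := Submodule.fg_iff_exists_fin_generating_family.mp hI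
  haveI : Module.Flat R (∀ _ : LinearMap.ker (Fintype.linearCombination R f), R) :=
    hpi _ (fun _ => R) (fun _ => inferInstance)
  obtain ⟨κ, a, y, h1, h2⟩ :=
    Module.Flat.isTrivialRelation_of_sum_smul_eq_zero
      (M := ∀ _ : LinearMap.ker (Fintype.linearCombination R f), R)
      (f := f) (x := fun i k => (k : Fin n → R) i) (by
        funext k
        have hkmem : (k : Fin n → R) ∈ LinearMap.ker (Fintype.linearCombination R f) := k.2
        rw [LinearMap.mem_ker, Fintype.linearCombination_apply] at hkmem
        simpa [mul_comm] using hkmem)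
  have hcolK : ∀ t : Fin κ,
      (fun i => a i t) ∈ LinearMap.ker (Fintype.linearCombination R f) := fun t => by
    rw [LinearMap.mem_ker, Fintype.linearCombination_apply]
    simpa [mul_comm] using h2 t
  have hKspan : LinearMap.ker (Fintype.linearCombination R f)
      = Submodule.span R (Set.range fun t : Fin κ => fun i => a i t) := by
    apply le_antisymm
    · intro k hk
      rw [mem_span_range_iff_exists_fun R]
      refine ⟨fun t => y t ⟨k, hk⟩, ?_⟩
      funext i
      have hx := congrFun (h1 i) ⟨k, hk⟩
      simp only [Finset.sum_apply, Pi.smul_apply, smul_eq_mul] at hx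
      simpa [Finset.sum_apply, mul_comm] using hx.symm
    · rw [Submodule.span_le]
      rintro _ ⟨t, rfl⟩
      exact hcolK t
  have hKfg : (LinearMap.ker (Fintype.linearCombination R f)).FG :=
    hKspan ▸ Submodule.fg_span (Set.finite_range _)
  have hrange : LinearMap.range (Fintype.linearCombination R f) = I := by
    rw [Fintype.range_linearCombination, hf]
  have hmem : ∀ v, Fintype.linearCombination R f v ∈ I := fun v => by
    rw [← hrange]; exact LinearMap.mem_range_self _ _
  have hsurj : Function.Surjective
      ((Fintype.linearCombination R f).codRestrict I hmem) := by
    rintro ⟨z, hz⟩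
    rw [← hrange] at hz
    obtain ⟨v, hv⟩ := hz
    exact ⟨v, Subtype.ext hv⟩
  exact Module.finitePresentation_of_surjective _ hsurj
    (by rwa [LinearMap.ker_codRestrict])

end Helpers

/-- The flat left `R`-modules are closed under direct limits and direct
products in `R`-Mod if and only if `R` is (right) coherent, i.e. every finitely generated
ideal is finitely presented.  (Mathlib's `Module.Flat` requires `R` commutative, so right
coherent coincides with coherent here.) -/
theorem stmt11 (R : Type) [CommRing R] :
    ((∀ (ι : Type) (M : ι → Type) [∀ i, AddCommGroup (M i)] [∀ i, Module R (M i)],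
        (∀ i, Module.Flat R (M i)) → Module.Flat R (∀ i, M i)) ∧
      (∀ (ι : Type) [Preorder ι] [Nonempty ι] [IsDirected ι (· ≤ ·)] [DecidableEq ι]
          (G : ι → Type) [∀ i, AddCommGroup (G i)] [∀ i, Module R (G i)]
          (f : ∀ i j, i ≤ j → G i →ₗ[R] G j)
          [DirectedSystem G (fun i j hij => f i j hij)],
        (∀ i, Module.Flat R (G i)) → Module.Flat R (Module.DirectLimit G f))) ↔
      (∀ I : Ideal R, I.FG → Module.FinitePresentation R I) := by
  constructor
  · rintro ⟨hpi, -⟩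
    exact stmt11.coherent_of_pi_flat hpi
  · intro hcoh
    refine ⟨fun ι M _ _ hM => stmt11.flat_pi hcoh ι M hM,
      fun ι _ _ _ _ G _ _ f _ hG => stmt11.flat_directLimit ι G f hG⟩
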